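/- Let τ ∈ S_{2n} be the fixed-point-free involution i ↦ i±n, and let B_n~ be the set of σ ∈ S_{2n} with τστ⁻¹ = σ⁻¹ whose cycle decomposition has no τ-self-symmetric cycles. Then B_n~ is invariant under conjugation by the centralizer B_n of τ, and for a partition λ of n, the subset B_λ~ of elements of B_n~ whose cycles form s pairs of τ-symmetric cycles of lengths λ₁,…,λ_s is a single B_n-conjugacy orbit. -/

import Mathlib

set_option linter.unnecessarySeqFocus false

open Equiv Equiv.Perm

/-- The fixed-point-free involution `τ = (1,n+1)(2,n+2)⋯(n,2n)` of `Fin (2n)`,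
sending `i ↦ i+n` for `i ≤ n` and `i ↦ i−n` for `i > n` (0-indexed). -/
def tau (n : ℕ) : Equiv.Perm (Fin (2 * n)) where
  toFun i := if h : (i : ℕ) < n then ⟨i + n, by omega⟩ else ⟨i - n, by have := i.isLt; omega⟩
  invFun i := if h : (i : ℕ) < n then ⟨i + n, by omega⟩ else ⟨i - n, by have := i.isLt; omega⟩
  left_inv := by
    rintro ⟨v, hv⟩
    by_cases h : v < n <;> simp [h] <;> split <;> (try omega) <;> (apply Fin.ext; simp <;> omega)
  right_inv := by
    rintro ⟨v, hv⟩
    by_cases h : v < n <;> simp [h] <;> split <;> (try omega) <;> (apply Fin.ext; simp <;> omega)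

section Aux
open Finset
lemma tau_tau {n : ℕ} (a : Fin (2*n)) : tau n (tau n a) = a := (tau n).left_inv a

lemma tau_inv (n : ℕ) : (tau n)⁻¹ = tau n := Equiv.ext fun _ => rfl

lemma tau_sq (n : ℕ) : tau n * tau n = 1 := by
  ext a; simp [tau_tau]

lemma tau_ne {n : ℕ} (a : Fin (2*n)) : tau n a ≠ a := by
  rcases a with ⟨v, hv⟩
  by_cases h : v < n <;> simp [tau, h, Fin.ext_iff] <;> omega

section
variable {n : ℕ} {σ : Equiv.Perm (Fin (2*n))} (h1 : tau n * σ * (tau n)⁻¹ = σ⁻¹)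
include h1

lemma tau_mul_sigma : tau n * σ = σ⁻¹ * tau n := by
  rw [tau_inv] at h1
  calc tau n * σ = (tau n * σ * tau n) * tau n := by
        rw [mul_assoc, mul_assoc, tau_sq, mul_one]
    _ = σ⁻¹ * tau n := by rw [h1]

lemma tau_apply_sigma (a : Fin (2*n)) : tau n (σ a) = σ⁻¹ (tau n a) := by
  have := congrArg (fun p => p a) (tau_mul_sigma h1)
  simpa using this

lemma sigma_apply_tau (a : Fin (2*n)) : σ (tau n a) = tau n (σ⁻¹ a) := by
  have := tau_apply_sigma h1 (σ⁻¹ a)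
  rw [show ∀ x, σ (σ⁻¹ x) = x from σ.apply_symm_apply] at this
  rw [this, show ∀ x, σ (σ⁻¹ x) = x from σ.apply_symm_apply]

lemma tau_zpow (k : ℤ) (a : Fin (2*n)) : tau n ((σ^k) a) = (σ^(-k)) (tau n a) := by
  have hc : tau n * σ^k * (tau n)⁻¹ = σ^(-k) := by
    rw [← conj_zpow, h1, inv_zpow, zpow_neg]
  have := congrArg (fun p => p (tau n a)) hc
  simpa [tau_inv, tau_tau] using this

lemma sameCycle_tau {x y : Fin (2*n)} (h : σ.SameCycle x y) :
    σ.SameCycle (tau n x) (tau n y) := by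
  obtain ⟨k, hk⟩ := h
  exact ⟨-k, by rw [← tau_zpow h1, hk]⟩

lemma sameCycle_tau_iff {x y : Fin (2*n)} :
    σ.SameCycle (tau n x) (tau n y) ↔ σ.SameCycle x y := by
  constructor
  · intro h; have := sameCycle_tau h1 h; rwa [tau_tau, tau_tau] at this
  · exact sameCycle_tau h1

end

section
variable {α : Type*} [Fintype α] [DecidableEq α]

lemma zpow_fix_iff (σ : Equiv.Perm α) (a : α) (j : ℤ) :
    (σ^j) a = a ↔ ((orderOf (σ.cycleOf a) : ℤ) ∣ j) := by
  rw [← Equiv.Perm.cycleOf_zpow_apply_self]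
  constructor
  · intro h
    by_cases hfix : σ a = a
    · rw [(Equiv.Perm.cycleOf_eq_one_iff σ).mpr hfix]
      simp
    · have hcyc : (σ.cycleOf a).IsCycle := σ.isCycle_cycleOf hfix
      have hmem : (σ.cycleOf a) a ≠ a := by
        rw [Equiv.Perm.cycleOf_apply_self]; exact hfix
      rw [orderOf_dvd_iff_zpow_eq_one]
      have hnn : 0 ≤ j % (orderOf (σ.cycleOf a) : ℤ) :=
        Int.emod_nonneg j (by exact_mod_cast (orderOf_pos (σ.cycleOf a)).ne')
      have hjr : (σ.cycleOf a) ^ j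
          = (σ.cycleOf a) ^ (j % (orderOf (σ.cycleOf a) : ℤ)).toNat := by
        rw [← zpow_natCast, Int.toNat_of_nonneg hnn, zpow_mod_orderOf]
      rw [hjr] at h ⊢
      exact (hcyc.pow_eq_one_iff' hmem).mpr h
  · intro h
    rw [orderOf_dvd_iff_zpow_eq_one] at h
    rw [h]; rfl

lemma zpow_eq_zpow_iff (σ : Equiv.Perm α) (a : α) (j j' : ℤ) :
    (σ^j) a = (σ^j') a ↔ ((orderOf (σ.cycleOf a) : ℤ) ∣ j - j') := by
  rw [← zpow_fix_iff σ a (j - j')]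
  constructor
  · intro h
    have : (σ^j') ((σ^(j-j')) a) = (σ^j') a := by
      rw [← Equiv.Perm.mul_apply, ← zpow_add]
      simpa [add_sub_cancel] using h
    exact (σ^j').injective this
  · intro h
    have : (σ^j) a = (σ^j') ((σ^(j-j')) a) := by
      rw [← Equiv.Perm.mul_apply, ← zpow_add]
      congr 1
      ring_nf
    rw [this, h]

lemma orbit_card (σ : Equiv.Perm α) (a : α) :
    (univ.filter fun x => σ.SameCycle a x).card = orderOf (σ.cycleOf a) := by
  by_cases hfix : σ a = a
  · have h1 : (univ.filter fun x => σ.SameCycle a x) = {a} := by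
      ext x
      simp only [mem_filter, mem_univ, true_and, mem_singleton]
      constructor
      · rintro ⟨k, hk⟩
        rw [← hk]
        exact Equiv.Perm.zpow_apply_eq_self_of_apply_eq_self hfix k
      · rintro rfl
        exact ⟨0, rfl⟩
    rw [h1, (Equiv.Perm.cycleOf_eq_one_iff σ).mpr hfix]
    simp
  · have h2 : (univ.filter fun x => σ.SameCycle a x) = (σ.cycleOf a).support := by
      ext x
      rw [Equiv.Perm.mem_support_cycleOf_iff]
      simp [Equiv.Perm.mem_support, hfix]
    rw [h2, ← (σ.isCycle_cycleOf hfix).orderOf]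
end

section
variable {n : ℕ} {σ : Equiv.Perm (Fin (2*n))} (h1 : tau n * σ * (tau n)⁻¹ = σ⁻¹)
include h1

lemma cycleOf_tau (a : Fin (2*n)) :
    σ.cycleOf (tau n a) = tau n * (σ.cycleOf a)⁻¹ * tau n := by
  have hiff : ∀ x, (σ.SameCycle (tau n a) x ↔ σ.SameCycle a (tau n x)) := by
    intro x
    conv_lhs => rw [← tau_tau x]
    rw [sameCycle_tau_iff h1]
  ext x
  simp only [Equiv.Perm.mul_apply]
  rw [Equiv.Perm.cycleOf_inv, Equiv.Perm.cycleOf_apply, Equiv.Perm.cycleOf_apply]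
  by_cases hs : σ.SameCycle (tau n a) x
  · rw [if_pos hs, if_pos (Equiv.Perm.sameCycle_inv.mpr (hiff x |>.mp hs))]
    have := congrArg (tau n) (tau_apply_sigma h1 x)
    rw [tau_tau] at this
    exact congrArg Fin.val this
  · rw [if_neg hs, if_neg fun hc => hs ((hiff x).mpr (Equiv.Perm.sameCycle_inv.mp hc))]
    exact congrArg Fin.val (tau_tau x).symm

lemma noSelfSym_iff :
    (∀ c ∈ σ.cycleFactorsFinset, tau n * c⁻¹ * tau n ≠ c) ↔
      ∀ a, ¬ σ.SameCycle a (tau n a) := by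
  constructor
  · intro hc a hsc
    by_cases hfix : σ a = a
    · obtain ⟨k, hk⟩ := hsc
      rw [Equiv.Perm.zpow_apply_eq_self_of_apply_eq_self hfix] at hk
      exact tau_ne a hk.symm
    · refine hc (σ.cycleOf a) (Equiv.Perm.cycleOf_mem_cycleFactorsFinset_iff.mpr
        (Equiv.Perm.mem_support.mpr hfix)) ?_
      rw [← cycleOf_tau h1 a, hsc.cycleOf_eq]
  · intro hA c hc hsym
    obtain ⟨a, ha⟩ := (Equiv.Perm.mem_cycleFactorsFinset_iff.mp hc).1
    have hasup : a ∈ c.support := Equiv.Perm.mem_support.mpr ha.1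
    have hceq : c = σ.cycleOf a := Equiv.Perm.cycle_is_cycleOf hasup hc
    have hta : σ.cycleOf (tau n a) = σ.cycleOf a := by
      rw [cycleOf_tau h1 a, ← hceq, hsym, hceq]
    have hτfix : σ (tau n a) ≠ tau n a := by
      intro hf
      have := (Equiv.Perm.cycleOf_eq_one_iff σ).mpr hf
      rw [hta, ← hceq] at this
      exact (Equiv.Perm.mem_cycleFactorsFinset_iff.mp hc).1.ne_one this
    have : tau n a ∈ (σ.cycleOf a).support := by
      rw [← hta]
      exact Equiv.Perm.mem_support_cycleOf_iff.mpr
        ⟨Equiv.Perm.SameCycle.refl _ _, Equiv.Perm.mem_support.mpr hτfix⟩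
    exact hA a (Equiv.Perm.mem_support_cycleOf_iff.mp this).1
end

end Aux

/-- `σ ∈ Bₙ~`: `τστ⁻¹ = σ⁻¹` and the cycle decomposition of `σ` has no
`τ`-self-symmetric cycles. -/
def TwistedNoSelfSym (n : ℕ) (σ : Equiv.Perm (Fin (2 * n))) : Prop :=
  tau n * σ * (tau n)⁻¹ = σ⁻¹ ∧
  ∀ c ∈ σ.cycleFactorsFinset, tau n * c⁻¹ * tau n ≠ c

/-- `σ ∈ B_λ~`: `σ ∈ Bₙ~` and its cycles form pairs of `τ`-symmetric cycles whose lengths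
are the parts of `λ`; equivalently its cycle type consists of each part `≥ 2` of `λ`
repeated twice (parts equal to `1` correspond to pairs of fixed points). -/
def InTwistedClass (n : ℕ) (lam : Multiset ℕ) (σ : Equiv.Perm (Fin (2 * n))) : Prop :=
  TwistedNoSelfSym n σ ∧
  σ.cycleType = Multiset.filter (2 ≤ ·) lam + Multiset.filter (2 ≤ ·) lam

def blockSetoid {n : ℕ} (σ : Equiv.Perm (Fin (2*n))) (h1 : tau n * σ * (tau n)⁻¹ = σ⁻¹) :
    Setoid (Fin (2*n)) where
  r a b := σ.SameCycle a b ∨ σ.SameCycle a (tau n b)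
  iseqv := by
    constructor
    · intro a; exact Or.inl (Equiv.Perm.SameCycle.refl _ _)
    · rintro a b (h | h)
      · exact Or.inl h.symm
      · right
        have := sameCycle_tau h1 h.symm
        rwa [tau_tau] at this
    · rintro a b c (hab | hab) (hbc | hbc)
      · exact Or.inl (hab.trans hbc)
      · exact Or.inr (hab.trans hbc)
      · exact Or.inr (hab.trans (sameCycle_tau h1 hbc))
      · refine Or.inl (hab.trans ?_)
        have := sameCycle_tau h1 hbc
        rwa [tau_tau] at this

lemma core {n : ℕ} (σ σ' : Equiv.Perm (Fin (2*n)))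
    (h1 : tau n * σ * (tau n)⁻¹ = σ⁻¹) (h1' : tau n * σ' * (tau n)⁻¹ = σ'⁻¹)
    (hA : ∀ a, ¬ σ.SameCycle a (tau n a)) (hA' : ∀ a, ¬ σ'.SameCycle a (tau n a))
    (hct : σ.cycleType = σ'.cycleType) :
    ∃ x : Equiv.Perm (Fin (2*n)), x * tau n = tau n * x ∧ x * σ * x⁻¹ = σ' := by
  classical
  obtain ⟨y, hy⟩ := isConj_iff.mp (Equiv.Perm.isConj_iff_cycleType_eq.mpr hct)
  set s : Setoid (Fin (2*n)) := blockSetoid σ h1 with hs_def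
  set s' : Setoid (Fin (2*n)) := blockSetoid σ' h1' with hs'_def
  haveI : Fintype (Quotient s) := Fintype.ofFinite _
  haveI : Fintype (Quotient s') := Fintype.ofFinite _
  -- order is invariant under tau
  have horder_tau : ∀ a, orderOf (σ.cycleOf (tau n a)) = orderOf (σ.cycleOf a) := by
    intro a
    have e : orderOf ((MulAut.conj (tau n)) (σ.cycleOf a)⁻¹) = orderOf (σ.cycleOf a)⁻¹ :=
      orderOf_injective (MulAut.conj (tau n)).toMonoidHom (MulAut.conj (tau n)).injective _
    rw [MulAut.conj_apply] at e
    rw [cycleOf_tau h1 a, show tau n * (σ.cycleOf a)⁻¹ * tau n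
        = tau n * (σ.cycleOf a)⁻¹ * (tau n)⁻¹ by rw [tau_inv], e, orderOf_inv]
  have horder_tau' : ∀ a, orderOf (σ'.cycleOf (tau n a)) = orderOf (σ'.cycleOf a) := by
    intro a
    have e : orderOf ((MulAut.conj (tau n)) (σ'.cycleOf a)⁻¹) = orderOf (σ'.cycleOf a)⁻¹ :=
      orderOf_injective (MulAut.conj (tau n)).toMonoidHom (MulAut.conj (tau n)).injective _
    rw [MulAut.conj_apply] at e
    rw [cycleOf_tau h1' a, show tau n * (σ'.cycleOf a)⁻¹ * tau n
        = tau n * (σ'.cycleOf a)⁻¹ * (tau n)⁻¹ by rw [tau_inv], e, orderOf_inv]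
  have hlen_r : ∀ a b : Fin (2*n), s.r a b → orderOf (σ.cycleOf a) = orderOf (σ.cycleOf b) := by
    rintro a b (h | h)
    · rw [h.cycleOf_eq]
    · rw [h.cycleOf_eq, horder_tau]
  have hlen_r' : ∀ a b : Fin (2*n), s'.r a b → orderOf (σ'.cycleOf a) = orderOf (σ'.cycleOf b) := by
    rintro a b (h | h)
    · rw [h.cycleOf_eq]
    · rw [h.cycleOf_eq, horder_tau']
  set bs : Quotient s → ℕ := Quotient.lift (fun a => orderOf (σ.cycleOf a)) hlen_r with hbs_def
  set bs' : Quotient s' → ℕ := Quotient.lift (fun a => orderOf (σ'.cycleOf a)) hlen_r' with hbs'_def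
  -- conjugation by y preserves cycle lengths
  have hzpow_y : ∀ (k : ℤ) (a : Fin (2*n)), (σ'^k) (y a) = y ((σ^k) a) := by
    intro k a
    have hc : σ'^k = y * σ^k * y⁻¹ := by rw [← hy, conj_zpow]
    rw [hc]
    simp [Equiv.Perm.mul_apply]
  have hSy : ∀ a b : Fin (2*n), σ.SameCycle a b ↔ σ'.SameCycle (y a) (y b) := by
    intro a b
    constructor
    · rintro ⟨k, hk⟩; exact ⟨k, by rw [hzpow_y, hk]⟩
    · rintro ⟨k, hk⟩; exact ⟨k, y.injective (by rw [← hzpow_y, hk])⟩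
  -- point counts agree
  have hpc : ∀ k : ℕ, (Finset.univ.filter fun a : Fin (2*n) => orderOf (σ.cycleOf a) = k).card
      = (Finset.univ.filter fun a : Fin (2*n) => orderOf (σ'.cycleOf a) = k).card := by
    intro k
    have hlen_y : ∀ a, orderOf (σ'.cycleOf (y a)) = orderOf (σ.cycleOf a) := by
      intro a
      rw [← orbit_card, ← orbit_card]
      apply Finset.card_bij (fun b _ => y.symm b)
      · intro b hb
        simp only [Finset.mem_filter, Finset.mem_univ, true_and] at hb ⊢
        have := (hSy a (y.symm b)).mpr (by rwa [Equiv.apply_symm_apply])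
        exact this
      · intro b₁ h₁ b₂ h₂ h
        exact y.symm.injective h
      · intro b hb
        simp only [Finset.mem_filter, Finset.mem_univ, true_and] at hb ⊢
        exact ⟨y b, (hSy a b).mp hb, Equiv.symm_apply_apply y b⟩
    apply Finset.card_bij (fun b _ => y b)
    · intro b hb
      simp only [Finset.mem_filter, Finset.mem_univ, true_and] at hb ⊢
      rw [hlen_y]; exact hb
    · intro b₁ h₁ b₂ h₂ h
      exact y.injective h
    · intro b hb
      simp only [Finset.mem_filter, Finset.mem_univ, true_and] at hb ⊢
      exact ⟨y.symm b, by rw [← hlen_y (y.symm b), Equiv.apply_symm_apply]; exact hb,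
        Equiv.apply_symm_apply y b⟩
  -- block cardinalities
  have hblock : ∀ b : Fin (2*n),
      (Finset.univ.filter fun a => Quotient.mk s a = Quotient.mk s b).card
        = 2 * orderOf (σ.cycleOf b) := by
    intro b
    have hset : (Finset.univ.filter fun a => Quotient.mk s a = Quotient.mk s b)
        = (Finset.univ.filter fun a => σ.SameCycle b a)
          ∪ (Finset.univ.filter fun a => σ.SameCycle b (tau n a)) := by
      ext a
      simp only [Finset.mem_filter, Finset.mem_univ, true_and, Finset.mem_union]
      constructor
      · intro h
        exact Quotient.exact h.symm
      · intro h
        exact Quotient.sound (Setoid.symm' s h)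
    have hdisj : Disjoint (Finset.univ.filter fun a => σ.SameCycle b a)
        (Finset.univ.filter fun a => σ.SameCycle b (tau n a)) := by
      rw [Finset.disjoint_left]
      intro a ha hb
      simp only [Finset.mem_filter, Finset.mem_univ, true_and] at ha hb
      exact hA a (ha.symm.trans hb)
    have hcard2 : (Finset.univ.filter fun a => σ.SameCycle b (tau n a)).card
        = (Finset.univ.filter fun a => σ.SameCycle b a).card := by
      apply Finset.card_bij (fun a _ => tau n a)
      · intro a ha
        simp only [Finset.mem_filter, Finset.mem_univ, true_and] at ha ⊢
        exact ha
      · intro a₁ h₁ a₂ h₂ h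
        exact (tau n).injective h
      · intro c hc
        simp only [Finset.mem_filter, Finset.mem_univ, true_and] at hc ⊢
        exact ⟨tau n c, by rwa [tau_tau], tau_tau c⟩
    rw [hset, Finset.card_union_of_disjoint hdisj, hcard2, orbit_card]
    omega
  have hblock' : ∀ b : Fin (2*n),
      (Finset.univ.filter fun a => Quotient.mk s' a = Quotient.mk s' b).card
        = 2 * orderOf (σ'.cycleOf b) := by
    intro b
    have hset : (Finset.univ.filter fun a => Quotient.mk s' a = Quotient.mk s' b)
        = (Finset.univ.filter fun a => σ'.SameCycle b a)
          ∪ (Finset.univ.filter fun a => σ'.SameCycle b (tau n a)) := by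
      ext a
      simp only [Finset.mem_filter, Finset.mem_univ, true_and, Finset.mem_union]
      constructor
      · intro h
        exact Quotient.exact h.symm
      · intro h
        exact Quotient.sound (Setoid.symm' s' h)
    have hdisj : Disjoint (Finset.univ.filter fun a => σ'.SameCycle b a)
        (Finset.univ.filter fun a => σ'.SameCycle b (tau n a)) := by
      rw [Finset.disjoint_left]
      intro a ha hb
      simp only [Finset.mem_filter, Finset.mem_univ, true_and] at ha hb
      exact hA' a (ha.symm.trans hb)
    have hcard2 : (Finset.univ.filter fun a => σ'.SameCycle b (tau n a)).card
        = (Finset.univ.filter fun a => σ'.SameCycle b a).card := by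
      apply Finset.card_bij (fun a _ => tau n a)
      · intro a ha
        simp only [Finset.mem_filter, Finset.mem_univ, true_and] at ha ⊢
        exact ha
      · intro a₁ h₁ a₂ h₂ h
        exact (tau n).injective h
      · intro c hc
        simp only [Finset.mem_filter, Finset.mem_univ, true_and] at hc ⊢
        exact ⟨tau n c, by rwa [tau_tau], tau_tau c⟩
    rw [hset, Finset.card_union_of_disjoint hdisj, hcard2, orbit_card]
    omega
  -- fibers of bs
  have hfiber : ∀ k : ℕ, (Finset.univ.filter fun a : Fin (2*n) => orderOf (σ.cycleOf a) = k).card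
      = (Finset.univ.filter fun q : Quotient s => bs q = k).card * (2 * k) := by
    intro k
    rw [Finset.card_eq_sum_card_fiberwise (f := fun a => Quotient.mk s a)
      (t := Finset.univ.filter fun q : Quotient s => bs q = k)
      (fun a ha => by
        simp only [Finset.coe_filter, Set.mem_setOf_eq, Finset.mem_univ, true_and] at ha ⊢
        exact ha)]
    have hsummand : ∀ q ∈ (Finset.univ.filter fun q : Quotient s => bs q = k),
        ((Finset.univ.filter fun a : Fin (2*n) => orderOf (σ.cycleOf a) = k).filter
          fun a => Quotient.mk s a = q).card = 2 * k := by
      intro q hq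
      simp only [Finset.mem_filter, Finset.mem_univ, true_and] at hq
      have houteq : Quotient.mk s q.out = q := Quotient.out_eq q
      have hbq : orderOf (σ.cycleOf q.out) = bs q := by
        conv_rhs => rw [← houteq]
        rfl
      have heq : ((Finset.univ.filter fun a : Fin (2*n) => orderOf (σ.cycleOf a) = k).filter
          fun a => Quotient.mk s a = q)
          = Finset.univ.filter fun a => Quotient.mk s a = Quotient.mk s q.out := by
        ext a
        simp only [Finset.mem_filter, Finset.mem_univ, true_and, houteq]
        constructor
        · exact fun h => h.2
        · intro h
          refine ⟨?_, h⟩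
          have h3 : bs (Quotient.mk s a) = bs q := by rw [h]
          have h4 : orderOf (σ.cycleOf a) = bs (Quotient.mk s a) := rfl
          rw [h4, h3, hq]
      rw [heq, hblock, hbq, hq]
    rw [Finset.sum_congr rfl hsummand, Finset.sum_const, smul_eq_mul]
  have hfiber' : ∀ k : ℕ,
      (Finset.univ.filter fun a : Fin (2*n) => orderOf (σ'.cycleOf a) = k).card
      = (Finset.univ.filter fun q : Quotient s' => bs' q = k).card * (2 * k) := by
    intro k
    rw [Finset.card_eq_sum_card_fiberwise (f := fun a => Quotient.mk s' a)
      (t := Finset.univ.filter fun q : Quotient s' => bs' q = k)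
      (fun a ha => by
        simp only [Finset.coe_filter, Set.mem_setOf_eq, Finset.mem_univ, true_and] at ha ⊢
        exact ha)]
    have hsummand : ∀ q ∈ (Finset.univ.filter fun q : Quotient s' => bs' q = k),
        ((Finset.univ.filter fun a : Fin (2*n) => orderOf (σ'.cycleOf a) = k).filter
          fun a => Quotient.mk s' a = q).card = 2 * k := by
      intro q hq
      simp only [Finset.mem_filter, Finset.mem_univ, true_and] at hq
      have houteq : Quotient.mk s' q.out = q := Quotient.out_eq q
      have hbq : orderOf (σ'.cycleOf q.out) = bs' q := by
        conv_rhs => rw [← houteq]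
        rfl
      have heq : ((Finset.univ.filter fun a : Fin (2*n) => orderOf (σ'.cycleOf a) = k).filter
          fun a => Quotient.mk s' a = q)
          = Finset.univ.filter fun a => Quotient.mk s' a = Quotient.mk s' q.out := by
        ext a
        simp only [Finset.mem_filter, Finset.mem_univ, true_and, houteq]
        constructor
        · exact fun h => h.2
        · intro h
          refine ⟨?_, h⟩
          have h3 : bs' (Quotient.mk s' a) = bs' q := by rw [h]
          have h4 : orderOf (σ'.cycleOf a) = bs' (Quotient.mk s' a) := rfl
          rw [h4, h3, hq]
      rw [heq, hblock', hbq, hq]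
    rw [Finset.sum_congr rfl hsummand, Finset.sum_const, smul_eq_mul]
  -- quotient fiber counts agree
  have hQcount : ∀ k : ℕ, (Finset.univ.filter fun q : Quotient s => bs q = k).card
      = (Finset.univ.filter fun q : Quotient s' => bs' q = k).card := by
    intro k
    rcases Nat.eq_zero_or_pos k with rfl | hk
    · have e1 : (Finset.univ.filter fun q : Quotient s => bs q = 0) = ∅ := by
        rw [Finset.filter_eq_empty_iff]
        intro q _
        have : bs q = orderOf (σ.cycleOf q.out) := by
          conv_lhs => rw [← Quotient.out_eq q]
          rfl
        rw [this]
        exact (orderOf_pos _).ne'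
      have e2 : (Finset.univ.filter fun q : Quotient s' => bs' q = 0) = ∅ := by
        rw [Finset.filter_eq_empty_iff]
        intro q _
        have : bs' q = orderOf (σ'.cycleOf q.out) := by
          conv_lhs => rw [← Quotient.out_eq q]
          rfl
        rw [this]
        exact (orderOf_pos _).ne'
      rw [e1, e2, Finset.card_empty, Finset.card_empty]
    · have h2k : 0 < 2 * k := by omega
      apply Nat.eq_of_mul_eq_mul_right h2k
      rw [← hfiber, ← hfiber', hpc]
  -- the block equivalence
  have hcard : ∀ k : ℕ, Fintype.card {q : Quotient s // bs q = k}
      = Fintype.card {q : Quotient s' // bs' q = k} := by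
    intro k
    rw [Fintype.card_subtype, Fintype.card_subtype]
    exact hQcount k
  set E : Quotient s ≃ Quotient s' :=
    Equiv.ofFiberEquiv (f := bs) (g := bs') (fun k => Fintype.equivOfCardEq (hcard k)) with hE_def
  have hbsE : ∀ q, bs' (E q) = bs q := fun q => Equiv.ofFiberEquiv_map _ q
  -- representatives
  set rep : Fin (2*n) → Fin (2*n) := fun a => (Quotient.mk s a).out with hrep_def
  set rep' : Fin (2*n) → Fin (2*n) := fun a => (E (Quotient.mk s a)).out with hrep'_def
  have hrel : ∀ a, σ.SameCycle (rep a) a ∨ σ.SameCycle (rep a) (tau n a) := by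
    intro a
    exact Quotient.exact (Quotient.out_eq (Quotient.mk s a))
  have hlenrep : ∀ a, orderOf (σ.cycleOf (rep a)) = orderOf (σ'.cycleOf (rep' a)) := by
    intro a
    have e1 : orderOf (σ.cycleOf (rep a)) = bs (Quotient.mk s a) := by
      conv_rhs => rw [← Quotient.out_eq (Quotient.mk s a)]
      rfl
    have e2 : orderOf (σ'.cycleOf (rep' a)) = bs' (E (Quotient.mk s a)) := by
      conv_rhs => rw [← Quotient.out_eq (E (Quotient.mk s a))]
      rfl
    rw [e1, e2, hbsE]
  -- the transfer lemma
  have hT : ∀ (a : Fin (2*n)) (j j' : ℤ), ((σ^j) (rep a) = (σ^j') (rep a))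
      ↔ ((σ'^j) (rep' a) = (σ'^j') (rep' a)) := by
    intro a j j'
    rw [zpow_eq_zpow_iff, zpow_eq_zpow_iff, hlenrep]
  -- quotient stability
  have hmk_sigma : ∀ a, Quotient.mk s (σ a) = Quotient.mk s a :=
    fun a => Quotient.sound (Or.inl ⟨-1, by rw [zpow_neg, zpow_one]; exact σ.symm_apply_apply a⟩)
  have hmk_tau : ∀ a, Quotient.mk s (tau n a) = Quotient.mk s a :=
    fun a => Quotient.sound (Or.inr (Equiv.Perm.SameCycle.refl _ _))
  have hmk_sigma' : ∀ (k : ℤ) a, Quotient.mk s' ((σ'^k) a) = Quotient.mk s' a :=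
    fun k a => Quotient.sound (Or.inl ⟨-k, by
      rw [← Equiv.Perm.mul_apply, ← zpow_add, neg_add_cancel, zpow_zero, Equiv.Perm.one_apply]⟩)
  have hmk_tau' : ∀ a, Quotient.mk s' (tau n a) = Quotient.mk s' a :=
    fun a => Quotient.sound (Or.inr (Equiv.Perm.SameCycle.refl _ _))
  -- the map f
  set f : Fin (2*n) → Fin (2*n) := fun a =>
    if h : σ.SameCycle (rep a) a then (σ' ^ Classical.choose h) (rep' a)
    else tau n ((σ' ^ Classical.choose ((hrel a).resolve_left h)) (rep' a)) with hf_def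
  have hfspec : ∀ a, (∃ k : ℤ, (σ^k) (rep a) = a ∧ f a = (σ'^k) (rep' a)) ∨
      ((¬ σ.SameCycle (rep a) a) ∧
        ∃ k : ℤ, (σ^k) (rep a) = tau n a ∧ f a = tau n ((σ'^k) (rep' a))) := by
    intro a
    by_cases h : σ.SameCycle (rep a) a
    · left
      exact ⟨Classical.choose h, Classical.choose_spec h, by simp only [hf_def, dif_pos h]⟩
    · right
      exact ⟨h, Classical.choose ((hrel a).resolve_left h),
        Classical.choose_spec ((hrel a).resolve_left h), by simp only [hf_def, dif_neg h]⟩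
  -- f commutes with tau
  have hftau : ∀ a, f (tau n a) = tau n (f a) := by
    intro a
    have hrepa : rep (tau n a) = rep a := by simp only [hrep_def, hmk_tau a]
    have hrep'a : rep' (tau n a) = rep' a := by simp only [hrep'_def, hmk_tau a]
    rcases hfspec a with ⟨k, hk, hfa⟩ | ⟨hn, k, hk, hfa⟩ <;>
      rcases hfspec (tau n a) with ⟨m, hm, hfta⟩ | ⟨hn2, m, hm, hfta⟩
    · exfalso
      rw [hrepa] at hm
      have hstep : (σ^(m-k)) a = (σ^m) (rep a) :=
        (congrArg (σ^(m-k)) hk).symm.trans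
          (by rw [← Equiv.Perm.mul_apply, ← zpow_add, sub_add_cancel])
      exact hA a ⟨m - k, hstep.trans hm⟩
    · rw [hrepa, tau_tau] at hm
      rw [hfta, hrep'a, hfa]
      exact congrArg (tau n) ((hT a m k).mp (by rw [hm, hk]))
    · rw [hrepa] at hm
      rw [hfta, hrep'a, hfa, tau_tau]
      exact (hT a m k).mp (by rw [hm, hk])
    · exfalso
      rw [hrepa, tau_tau] at hm
      exact hn ⟨m, hm⟩
  -- f intertwines sigma and sigma'
  have hfsigma : ∀ a, f (σ a) = σ' (f a) := by
    intro a
    have hrepa : rep (σ a) = rep a := by simp only [hrep_def, hmk_sigma a]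
    have hrep'a : rep' (σ a) = rep' a := by simp only [hrep'_def, hmk_sigma a]
    rcases hfspec a with ⟨k, hk, hfa⟩ | ⟨hn, k, hk, hfa⟩ <;>
      rcases hfspec (σ a) with ⟨m, hm, hfsa⟩ | ⟨hn2, m, hm, hfsa⟩
    · rw [hrepa] at hm
      rw [hfsa, hrep'a, hfa]
      have hka : (σ^(1+k)) (rep a) = σ a := by
        rw [zpow_add, zpow_one, Equiv.Perm.mul_apply, hk]
      have h2 := (hT a m (1+k)).mp (by rw [hm, hka])
      rw [h2, zpow_add, zpow_one, Equiv.Perm.mul_apply]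
    · exfalso
      rw [hrepa] at hm
      have hka : (σ^(1+k)) (rep a) = σ a := by
        rw [zpow_add, zpow_one, Equiv.Perm.mul_apply, hk]
      have hstep : (σ^(m-(1+k))) (σ a) = (σ^m) (rep a) :=
        (congrArg (σ^(m-(1+k))) hka).symm.trans
          (by rw [← Equiv.Perm.mul_apply, ← zpow_add, sub_add_cancel])
      exact hA (σ a) ⟨m - (1+k), hstep.trans hm⟩
    · exfalso
      rw [hrepa] at hm
      exact hn ⟨m - 1, by
        rw [show m - (1:ℤ) = -1 + m by ring, zpow_add, Equiv.Perm.mul_apply, hm, zpow_neg_one]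
        exact σ.symm_apply_apply a⟩
    · rw [hrepa] at hm
      rw [hfsa, hrep'a, hfa]
      have hm' : (σ^m) (rep a) = (σ^(k-1)) (rep a) := by
        rw [hm, tau_apply_sigma h1 a, ← hk,
          show k - (1:ℤ) = -1 + k by ring, zpow_add, Equiv.Perm.mul_apply, zpow_neg_one]
      have h2 := (hT a m (k-1)).mp hm'
      rw [h2, sigma_apply_tau h1' ((σ'^k) (rep' a))]
      refine congrArg (tau n) ?_
      rw [show k - (1:ℤ) = -1 + k by ring, zpow_add, Equiv.Perm.mul_apply, zpow_neg_one]
  -- the image of f lands in the right block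
  have hmkf : ∀ a, Quotient.mk s' (f a) = E (Quotient.mk s a) := by
    intro a
    rcases hfspec a with ⟨k, hk, hfa⟩ | ⟨hn, k, hk, hfa⟩
    · rw [hfa, hmk_sigma' k]
      exact Quotient.out_eq _
    · rw [hfa, hmk_tau', hmk_sigma' k]
      exact Quotient.out_eq _
  -- f is injective
  have hfinj : Function.Injective f := by
    intro a b hfab
    have hq : Quotient.mk s a = Quotient.mk s b :=
      E.injective (by rw [← hmkf, ← hmkf, hfab])
    have hrepab : rep a = rep b := by simp only [hrep_def, hq]
    have hrep'ab : rep' a = rep' b := by simp only [hrep'_def, hq]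
    rcases hfspec a with ⟨k, hk, hfa⟩ | ⟨hn, k, hk, hfa⟩ <;>
      rcases hfspec b with ⟨m, hm, hfb⟩ | ⟨hn2, m, hm, hfb⟩
    · rw [hfa, hfb, ← hrep'ab] at hfab
      have := (hT a k m).mpr hfab
      rw [hk, hrepab, hm] at this
      exact this
    · exfalso
      rw [hfa, hfb, ← hrep'ab] at hfab
      refine hA' ((σ'^m) (rep' a)) ⟨k - m, ?_⟩
      rw [← Equiv.Perm.mul_apply, ← zpow_add, sub_add_cancel, hfab]
    · exfalso
      rw [hfa, hfb, ← hrep'ab] at hfab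
      refine hA' ((σ'^k) (rep' a)) ⟨m - k, ?_⟩
      rw [← Equiv.Perm.mul_apply, ← zpow_add, sub_add_cancel, ← hfab]
    · rw [hfa, hfb, ← hrep'ab] at hfab
      have h2 : (σ'^k) (rep' a) = (σ'^m) (rep' a) := (tau n).injective hfab
      have := (hT a k m).mpr h2
      rw [hk, hrepab, hm] at this
      exact (tau n).injective this
  -- assemble the permutation
  have hfbij : Function.Bijective f := Finite.injective_iff_bijective.mp hfinj
  refine ⟨Equiv.ofBijective f hfbij, Equiv.ext fun a => hftau a, ?_⟩
  have hxs : Equiv.ofBijective f hfbij * σ = σ' * Equiv.ofBijective f hfbij :=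
    Equiv.ext fun a => hfsigma a
  rw [hxs, mul_assoc, mul_inv_cancel, mul_one]

/-- `Bₙ~` is invariant under conjugation by the centralizer `Bₙ` of `τ`, and for each
partition `λ` of `n` the subset `B_λ~` is a single `Bₙ`-conjugacy orbit. -/
theorem twisted_class_single_orbit (n : ℕ) (P : Nat.Partition n) :
    (∀ x ∈ Subgroup.centralizer {tau n}, ∀ σ : Equiv.Perm (Fin (2 * n)),
      TwistedNoSelfSym n σ → TwistedNoSelfSym n (x * σ * x⁻¹)) ∧
    (∀ x ∈ Subgroup.centralizer {tau n}, ∀ σ : Equiv.Perm (Fin (2 * n)),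
      InTwistedClass n P.parts σ → InTwistedClass n P.parts (x * σ * x⁻¹)) ∧
    (∀ σ σ' : Equiv.Perm (Fin (2 * n)),
      InTwistedClass n P.parts σ → InTwistedClass n P.parts σ' →
      ∃ x ∈ Subgroup.centralizer {tau n}, x * σ * x⁻¹ = σ') := by
  have hconj : ∀ x ∈ Subgroup.centralizer {tau n}, ∀ σ : Equiv.Perm (Fin (2 * n)),
      TwistedNoSelfSym n σ → TwistedNoSelfSym n (x * σ * x⁻¹) := by
    intro x hx σ hσ
    rw [Subgroup.mem_centralizer_singleton_iff] at hx
    obtain ⟨hσ1, hσ2⟩ := hσ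
    have h2 : tau n * x = x * tau n := hx.symm
    have h3 : x⁻¹ * (tau n)⁻¹ = (tau n)⁻¹ * x⁻¹ := by
      rw [← mul_inv_rev, ← mul_inv_rev, hx]
    have hkey : tau n * (x * σ * x⁻¹) * (tau n)⁻¹ = (x * σ * x⁻¹)⁻¹ := by
      rw [show tau n * (x * σ * x⁻¹) * (tau n)⁻¹
            = (tau n * x) * σ * (x⁻¹ * (tau n)⁻¹) by group,
        h2, h3, show x * tau n * σ * ((tau n)⁻¹ * x⁻¹)
            = x * (tau n * σ * (tau n)⁻¹) * x⁻¹ by group, hσ1]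
      group
    refine ⟨hkey, ?_⟩
    rw [noSelfSym_iff hkey]
    have hA := (noSelfSym_iff hσ1).mp hσ2
    intro a hsc
    obtain ⟨k, hk⟩ := hsc
    rw [conj_zpow] at hk
    have h5 : x ((σ^k) (x⁻¹ a)) = tau n a := hk
    have h6 : (σ^k) (x⁻¹ a) = x⁻¹ (tau n a) := by
      rw [← h5, show ∀ y, x⁻¹ (x y) = y from x.symm_apply_apply]
    have hxinv : x⁻¹ * tau n = tau n * x⁻¹ := by
      rw [show x⁻¹ * tau n = x⁻¹ * (tau n * x) * x⁻¹ by group, ← hx]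
      group
    refine hA (x⁻¹ a) ⟨k, ?_⟩
    rw [h6]
    have := congrArg (fun p : Equiv.Perm (Fin (2*n)) => p a) hxinv
    simpa using this
  refine ⟨hconj, ?_, ?_⟩
  · intro x hx σ hσ
    exact ⟨hconj x hx σ hσ.1, by rw [Equiv.Perm.cycleType_conj]; exact hσ.2⟩
  · intro σ σ' hσ hσ'
    obtain ⟨⟨h1σ, h2σ⟩, hctσ⟩ := hσ
    obtain ⟨⟨h1σ', h2σ'⟩, hctσ'⟩ := hσ'
    obtain ⟨x, hx1, hx2⟩ := core σ σ' h1σ h1σ'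
      ((noSelfSym_iff h1σ).mp h2σ) ((noSelfSym_iff h1σ').mp h2σ')
      (by rw [hctσ, hctσ'])
    exact ⟨x, Subgroup.mem_centralizer_singleton_iff.mpr hx1, hx2⟩
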